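/- Let n ≥ 1, z ∈ ℂ∖ℝ, and let Ω ⊆ ℂ be open with z ∈ Ω. Let ψ : ℝ³ × Ω → Mₙ(ℂ) be pointwise invertible and continuously differentiable in (x,u,v), and let A, B : ℝ³ → Mₙ(ℂ) take skew-Hermitian values (A* = −A, B* = −B) and satisfy λ∂_xψ − ∂_uψ = Aψ and λ∂_vψ − ∂_xψ = Bψ for all λ ∈ Ω. Let π : ℝ³ → Mₙ(ℂ) be a continuously differentiable family of Hermitian projections. Then the following are equivalent: (i) there exist Ã, B̃ : ℝ³ → Mₙ(ℂ) such that ψ₁(p, λ) := g_{z,π(p)}(λ)·ψ(p, λ) satisfies λ∂_xψ₁ − ∂_uψ₁ = Ãψ₁ and λ∂_vψ₁ − ∂_xψ₁ = B̃ψ₁ for all λ ∈ Ω∖{z}; (ii) π satisfies the analytic Bäcklund transformation equations π^⊥(z∂_xπ − ∂_uπ − Aπ) = 0 and π^⊥(z∂_vπ − ∂_xπ − Bπ) = 0 everywhere on ℝ³. -/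

import Mathlib

open Matrix Complex Filter

noncomputable section

/-- A Hermitian projection of ℂⁿ: a matrix with π* = π and π² = π. -/
def IsHermitianProj {n : ℕ} (π : Matrix (Fin n) (Fin n) ℂ) : Prop :=
  πᴴ = π ∧ π * π = π

/-- The simple element g_{z,π}(λ) = I + ((z - conj z)/(λ - z))·(I - π). -/
def simpleElt {n : ℕ} (z : ℂ) (π : Matrix (Fin n) (Fin n) ℂ) (lam : ℂ) :
    Matrix (Fin n) (Fin n) ℂ :=
  1 + ((z - (starRingEnd ℂ) z) / (lam - z)) • (1 - π)

/-- The range of the linear map defined by a matrix. -/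
def mrange {n m : ℕ} (A : Matrix (Fin n) (Fin m) ℂ) :
    Submodule ℂ (EuclideanSpace ℂ (Fin n)) :=
  LinearMap.range (Matrix.toEuclideanLin A)

/-- Entrywise partial derivative ∂_x of a matrix-valued map on ℝ³, p = (x,u,v). -/
def pdx {m k : Type*} (F : ℝ × ℝ × ℝ → Matrix m k ℂ) (p : ℝ × ℝ × ℝ) : Matrix m k ℂ :=
  fun i j => deriv (fun s => F (s, p.2.1, p.2.2) i j) p.1

/-- Entrywise partial derivative ∂_u of a matrix-valued map on ℝ³, p = (x,u,v). -/
def pdu {m k : Type*} (F : ℝ × ℝ × ℝ → Matrix m k ℂ) (p : ℝ × ℝ × ℝ) : Matrix m k ℂ :=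
  fun i j => deriv (fun s => F (p.1, s, p.2.2) i j) p.2.1

/-- Entrywise partial derivative ∂_v of a matrix-valued map on ℝ³, p = (x,u,v). -/
def pdv {m k : Type*} (F : ℝ × ℝ × ℝ → Matrix m k ℂ) (p : ℝ × ℝ × ℝ) : Matrix m k ℂ :=
  fun i j => deriv (fun s => F (p.1, p.2.1, s) i j) p.2.2

set_option maxHeartbeats 1600000

def mderiv {n : ℕ} (F : ℝ → Matrix (Fin n) (Fin n) ℂ) (s : ℝ) : Matrix (Fin n) (Fin n) ℂ :=
  fun i j => deriv (fun t => F t i j) s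

lemma mderiv_mul {n : ℕ} (F G : ℝ → Matrix (Fin n) (Fin n) ℂ) (s : ℝ)
    (hF : ∀ i j, DifferentiableAt ℝ (fun t => F t i j) s)
    (hG : ∀ i j, DifferentiableAt ℝ (fun t => G t i j) s) :
    mderiv (fun t => F t * G t) s = mderiv F s * G s + F s * mderiv G s := by
  ext i j
  have h1 : (fun t => (F t * G t) i j) = fun t => ∑ k, F t i k * G t k j := by
    funext t; simp [Matrix.mul_apply]
  rw [show mderiv (fun t => F t * G t) s i j = deriv (fun t => (F t * G t) i j) s from rfl,
    h1, deriv_fun_sum (A := fun k t => F t i k * G t k j) (fun k _ => ((hF i k).mul (hG k j)))]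
  simp only [Matrix.add_apply, Matrix.mul_apply, mderiv]
  rw [← Finset.sum_add_distrib]
  congr 1; funext k
  rw [deriv_fun_mul (hF i k) (hG k j)]

lemma mderiv_conjT {n : ℕ} (F : ℝ → Matrix (Fin n) (Fin n) ℂ) (s : ℝ)
    (hF : ∀ i j, DifferentiableAt ℝ (fun t => F t i j) s) :
    mderiv (fun t => (F t)ᴴ) s = (mderiv F s)ᴴ := by
  ext i j
  show deriv (fun t => (starRingEnd ℂ) (F t j i)) s = (starRingEnd ℂ) (deriv (fun t => F t j i) s)
  exact ((hF j i).hasDerivAt.star.deriv)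

lemma mderiv_simpleElt {n : ℕ} (z lam : ℂ) (Pf : ℝ → Matrix (Fin n) (Fin n) ℂ) (s : ℝ)
    (hPf : ∀ i j, DifferentiableAt ℝ (fun t => Pf t i j) s) :
    mderiv (fun t => simpleElt z (Pf t) lam) s
      = (-((z - (starRingEnd ℂ) z) / (lam - z))) • mderiv Pf s := by
  ext i j
  have h1 : (fun t => simpleElt z (Pf t) lam i j)
      = fun t => (1 : Matrix (Fin n) (Fin n) ℂ) i j
        + ((z - (starRingEnd ℂ) z) / (lam - z)) * ((1 : Matrix (Fin n) (Fin n) ℂ) i j - Pf t i j) := by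
    funext t; simp [simpleElt]
  show deriv (fun t => simpleElt z (Pf t) lam i j) s = _
  rw [h1]
  rw [((((hPf i j).hasDerivAt.const_sub ((1 : Matrix (Fin n) (Fin n) ℂ) i j)).const_mul
    ((z - (starRingEnd ℂ) z) / (lam - z))).const_add ((1 : Matrix (Fin n) (Fin n) ℂ) i j)).deriv]
  simp [mderiv]

lemma simpleElt_diff_entry {n : ℕ} (z lam : ℂ) (Pf : ℝ → Matrix (Fin n) (Fin n) ℂ) (s : ℝ)
    (hPf : ∀ i j, DifferentiableAt ℝ (fun t => Pf t i j) s) (i j : Fin n) :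
    DifferentiableAt ℝ (fun t => simpleElt z (Pf t) lam i j) s := by
  have h1 : (fun t => simpleElt z (Pf t) lam i j)
      = fun t => (1 : Matrix (Fin n) (Fin n) ℂ) i j
        + ((z - (starRingEnd ℂ) z) / (lam - z)) * ((1 : Matrix (Fin n) (Fin n) ℂ) i j - Pf t i j) := by
    funext t; simp [simpleElt]
  rw [h1]
  exact (differentiableAt_const _).add ((differentiableAt_const _).mul
    ((differentiableAt_const _).sub (hPf i j)))

lemma proj_deriv {n : ℕ} (Pf : ℝ → Matrix (Fin n) (Fin n) ℂ) (s : ℝ)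
    (hd : ∀ i j, DifferentiableAt ℝ (fun t => Pf t i j) s)
    (hp : ∀ t, IsHermitianProj (Pf t)) :
    mderiv Pf s = mderiv Pf s * Pf s + Pf s * mderiv Pf s ∧ (mderiv Pf s)ᴴ = mderiv Pf s := by
  constructor
  · have h1 : Pf = fun t => Pf t * Pf t := funext fun t => ((hp t).2).symm
    calc mderiv Pf s = mderiv (fun t => Pf t * Pf t) s := by rw [← h1]
      _ = mderiv Pf s * Pf s + Pf s * mderiv Pf s := mderiv_mul Pf Pf s hd hd
  · have h2 : (fun t => (Pf t)ᴴ) = Pf := funext fun t => (hp t).1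
    calc (mderiv Pf s)ᴴ = mderiv (fun t => (Pf t)ᴴ) s := (mderiv_conjT Pf s hd).symm
      _ = mderiv Pf s := by rw [h2]

lemma eq_of_sub_eq_sub {M : Type*} [AddCommGroup M] {a b x y : M}
    (h : x = y) (hk : a - b = x - y) : a = b := by
  rw [h, sub_self] at hk; exact sub_eq_zero.mp hk

lemma alg_core {n : ℕ} (z : ℂ) (pr D1 D2 S : Matrix (Fin n) (Fin n) ℂ)
    (hpr2 : pr * pr = pr)
    (hD1 : D1 = D1 * pr + pr * D1) (hD2 : D2 = D2 * pr + pr * D2)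
    (hprh : prᴴ = pr) (hD1h : D1ᴴ = D1) (hD2h : D2ᴴ = D2) (hS : Sᴴ = -S) :
    (z • D1 - D2 + S * (1 - pr) - (1 - pr) * S
        - (z - (starRingEnd ℂ) z) • (D1 * (1 - pr)) = 0)
    ↔ (1 - pr) * (z • D1 - D2 - S * pr) = 0 := by
  have e1 : D1 * (1 - pr) = pr * D1 := by
    rw [mul_sub, mul_one]; exact sub_eq_iff_eq_add'.mpr hD1
  have e1' : D2 * (1 - pr) = pr * D2 := by
    rw [mul_sub, mul_one]; exact sub_eq_iff_eq_add'.mpr hD2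
  have h0 : (1 - pr) * pr = 0 := by rw [sub_mul, one_mul, hpr2, sub_self]
  obtain ⟨M, hM⟩ : ∃ M, M = z • D1 - D2 - S * pr := ⟨_, rfl⟩
  obtain ⟨c, hc⟩ : ∃ c, c = z - (starRingEnd ℂ) z := ⟨_, rfl⟩
  have hform : z • D1 - D2 + S * (1 - pr) - (1 - pr) * S - c • (D1 * (1 - pr))
      = M + pr * S - c • (D1 * (1 - pr)) := by
    rw [hM]; simp only [mul_sub, sub_mul, mul_one, one_mul]; module
  rw [← hc, ← hM, hform]
  constructor
  · intro h
    have h2 := congrArg (fun X => (1 - pr) * X) h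
    simp only [mul_zero] at h2
    calc (1 - pr) * M
        = (1 - pr) * (M + pr * S - c • (D1 * (1 - pr))) := by
          rw [e1]
          simp only [mul_add, mul_sub, mul_smul_comm, ← mul_assoc, h0, zero_mul,
            smul_zero, add_zero, sub_zero]
      _ = 0 := h2
  · intro h
    have hMeq : M = pr * M := by
      have h' : M - pr * M = 0 := by rwa [sub_mul, one_mul] at h
      linear_combination (norm := noncomm_ring) h'
    have hMH : Mᴴ = (starRingEnd ℂ) z • D1 - D2 + pr * S := by
      rw [hM]
      simp [conjTranspose_sub, conjTranspose_smul, conjTranspose_mul, hprh, hD1h, hD2h, hS,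
        sub_neg_eq_add, mul_neg]
    have hH2 : ((starRingEnd ℂ) z • D1 - D2 + pr * S) * (1 - pr) = 0 := by
      have h2 := congrArg conjTranspose h
      rw [conjTranspose_mul, conjTranspose_sub, conjTranspose_one, hprh, hMH] at h2
      simpa using h2
    calc M + pr * S - c • (D1 * (1 - pr))
        = pr * M + pr * S - c • (pr * D1) := by rw [e1, ← hMeq]
      _ = pr * (M + S - c • D1) := by
          simp only [mul_add, mul_sub, mul_smul_comm]
      _ = pr * ((starRingEnd ℂ) z • D1 - D2 + S * (1 - pr)) := by
          congr 1
          rw [hM, hc]; simp only [mul_sub, mul_one]; module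
      _ = (starRingEnd ℂ) z • (pr * D1) - pr * D2 + pr * (S * (1 - pr)) := by
          simp only [mul_add, mul_sub, mul_smul_comm]
      _ = ((starRingEnd ℂ) z • D1 - D2 + pr * S) * (1 - pr) := by
          rw [← e1, ← e1', ← mul_assoc]
          simp only [sub_mul, add_mul, smul_mul_assoc]
      _ = 0 := hH2
lemma coeff_construct {n : ℕ} (z c lam : ℂ) (hcz : c = z - (starRingEnd ℂ) z)
    (hlz : lam ≠ z) (pr S D1 D2 : Matrix (Fin n) (Fin n) ℂ)
    (hstar : z • D1 - D2 + S * (1 - pr) - (1 - pr) * S - c • (D1 * (1 - pr)) = 0) :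
    (S - c • D1) * simpleElt z pr lam
      = (-(c / (lam - z))) • (lam • D1 - D2) + simpleElt z pr lam * S := by
  have hlz' : lam - z ≠ 0 := sub_ne_zero.mpr hlz
  rw [← sub_eq_zero]
  have key : (S - c • D1) * simpleElt z pr lam
      - ((-(c / (lam - z))) • (lam • D1 - D2) + simpleElt z pr lam * S)
      = (c / (lam - z)) • (z • D1 - D2 + S * (1 - pr) - (1 - pr) * S - c • (D1 * (1 - pr))) := by
    simp only [simpleElt, ← hcz, mul_add, add_mul, mul_one, one_mul, mul_sub, sub_mul,
      smul_mul_assoc, mul_smul_comm, smul_add, smul_sub, smul_smul, neg_smul, neg_mul,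
      mul_neg, smul_neg]
    match_scalars <;> field_simp <;> ring
  rw [key, hstar, smul_zero]

lemma coeff_extract {n : ℕ} (z c : ℂ) (hcz : c = z - (starRingEnd ℂ) z) (hc : c ≠ 0)
    (lam₁ lam₂ : ℂ) (h1z : lam₁ ≠ z) (h2z : lam₂ ≠ z) (h12 : lam₁ ≠ lam₂)
    (pr Mt S D1 D2 : Matrix (Fin n) (Fin n) ℂ)
    (E1 : Mt * simpleElt z pr lam₁ = (-(c / (lam₁ - z))) • (lam₁ • D1 - D2) + simpleElt z pr lam₁ * S)
    (E2 : Mt * simpleElt z pr lam₂ = (-(c / (lam₂ - z))) • (lam₂ • D1 - D2) + simpleElt z pr lam₂ * S) :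
    z • D1 - D2 + S * (1 - pr) - (1 - pr) * S - c • (D1 * (1 - pr)) = 0 := by
  have h1z' : lam₁ - z ≠ 0 := sub_ne_zero.mpr h1z
  have h2z' : lam₂ - z ≠ 0 := sub_ne_zero.mpr h2z
  have h12' : lam₁ - lam₂ ≠ 0 := sub_ne_zero.mpr h12
  -- solve for Mt
  have hMt : Mt = S - c • D1 := by
    have hE1 : Mt * simpleElt z pr lam₁
        - ((-(c / (lam₁ - z))) • (lam₁ • D1 - D2) + simpleElt z pr lam₁ * S) = 0 :=
      sub_eq_zero.mpr E1
    have hE2 : Mt * simpleElt z pr lam₂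
        - ((-(c / (lam₂ - z))) • (lam₂ • D1 - D2) + simpleElt z pr lam₂ * S) = 0 :=
      sub_eq_zero.mpr E2
    apply smul_right_injective (Matrix (Fin n) (Fin n) ℂ) h12'
    beta_reduce
    have key : (lam₁ - lam₂) • Mt - (lam₁ - lam₂) • (S - c • D1)
        = (lam₁ - z) • (Mt * simpleElt z pr lam₁
            - ((-(c / (lam₁ - z))) • (lam₁ • D1 - D2) + simpleElt z pr lam₁ * S))
          - (lam₂ - z) • (Mt * simpleElt z pr lam₂
            - ((-(c / (lam₂ - z))) • (lam₂ • D1 - D2) + simpleElt z pr lam₂ * S)) := by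
      simp only [simpleElt, ← hcz, mul_add, add_mul, mul_one, one_mul, mul_sub, sub_mul,
        smul_mul_assoc, mul_smul_comm, smul_add, smul_sub, smul_smul, neg_smul, neg_mul,
        mul_neg, smul_neg]
      match_scalars <;> field_simp <;> ring
    rw [← sub_eq_zero]
    rw [key, hE1, hE2, smul_zero, smul_zero, sub_zero]
  subst hMt
  apply smul_right_injective (Matrix (Fin n) (Fin n) ℂ) hc
  beta_reduce
  have hE1 : (S - c • D1) * simpleElt z pr lam₁
      - ((-(c / (lam₁ - z))) • (lam₁ • D1 - D2) + simpleElt z pr lam₁ * S) = 0 :=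
    sub_eq_zero.mpr E1
  have key : c • (z • D1 - D2 + S * (1 - pr) - (1 - pr) * S - c • (D1 * (1 - pr)))
      = (lam₁ - z) • ((S - c • D1) * simpleElt z pr lam₁
          - ((-(c / (lam₁ - z))) • (lam₁ • D1 - D2) + simpleElt z pr lam₁ * S)) := by
    simp only [simpleElt, ← hcz, mul_add, add_mul, mul_one, one_mul, mul_sub, sub_mul,
      smul_mul_assoc, mul_smul_comm, smul_add, smul_sub, smul_smul, neg_smul, neg_mul,
      mul_neg, smul_neg]
    match_scalars <;> field_simp <;> ring
  rw [key, hE1, smul_zero, smul_zero]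
/-- Proposition 7.1 (analytic Bäcklund transformation): g_{z,π}ψ is an extended solution
(i.e. ψ₁ = g_{z,π}ψ satisfies the linear system with some coefficients Ã, B̃) if and only
if π satisfies π^⊥(z∂_xπ − ∂_uπ − Aπ) = 0 and π^⊥(z∂_vπ − ∂_xπ − Bπ) = 0. -/
theorem statement14 {n : ℕ} (hn : 1 ≤ n) (z : ℂ) (hz : z.im ≠ 0)
    (Ω : Set ℂ) (hΩ : IsOpen Ω) (hzΩ : z ∈ Ω)
    (ψ : ℝ × ℝ × ℝ → ℂ → Matrix (Fin n) (Fin n) ℂ)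
    (hinv : ∀ p, ∀ lam ∈ Ω, IsUnit (ψ p lam))
    (hC1 : ∀ lam ∈ Ω, ∀ i j, ContDiff ℝ 1 (fun p => ψ p lam i j))
    (A B : ℝ × ℝ × ℝ → Matrix (Fin n) (Fin n) ℂ)
    (hAskew : ∀ p, (A p)ᴴ = -A p) (hBskew : ∀ p, (B p)ᴴ = -B p)
    (hA : ∀ p, ∀ lam ∈ Ω,
      lam • pdx (fun q => ψ q lam) p - pdu (fun q => ψ q lam) p = A p * ψ p lam)
    (hB : ∀ p, ∀ lam ∈ Ω,
      lam • pdv (fun q => ψ q lam) p - pdx (fun q => ψ q lam) p = B p * ψ p lam)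
    (π : ℝ × ℝ × ℝ → Matrix (Fin n) (Fin n) ℂ)
    (hπ : ∀ p, IsHermitianProj (π p))
    (hπC1 : ∀ i j, ContDiff ℝ 1 (fun p => π p i j)) :
    (∃ At Bt : ℝ × ℝ × ℝ → Matrix (Fin n) (Fin n) ℂ,
      ∀ p, ∀ lam ∈ Ω, lam ≠ z →
        (lam • pdx (fun q => simpleElt z (π q) lam * ψ q lam) p
            - pdu (fun q => simpleElt z (π q) lam * ψ q lam) p
          = At p * (simpleElt z (π p) lam * ψ p lam)) ∧
        (lam • pdv (fun q => simpleElt z (π q) lam * ψ q lam) p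
            - pdx (fun q => simpleElt z (π q) lam * ψ q lam) p
          = Bt p * (simpleElt z (π p) lam * ψ p lam)))
    ↔ (∀ p, (1 - π p) * (z • pdx π p - pdu π p - A p * π p) = 0 ∧
           (1 - π p) * (z • pdv π p - pdx π p - B p * π p) = 0) := by
  have hc : z - (starRingEnd ℂ) z ≠ 0 :=
    sub_ne_zero.mpr fun h => hz (Complex.conj_eq_iff_im.mp h.symm)
  set c : ℂ := z - (starRingEnd ℂ) z with hcdef
  -- differentiability of slices
  have hπdiff : ∀ i j, Differentiable ℝ (fun p => π p i j) :=
    fun i j => (hπC1 i j).differentiable one_ne_zero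
  have hπx : ∀ p : ℝ × ℝ × ℝ, ∀ i j,
      DifferentiableAt ℝ (fun t => π (t, p.2.1, p.2.2) i j) p.1 := by
    intro p i j
    exact ((hπdiff i j).comp (by fun_prop : Differentiable ℝ
      (fun t : ℝ => ((t, p.2.1, p.2.2) : ℝ × ℝ × ℝ)))).differentiableAt
  have hπu : ∀ p : ℝ × ℝ × ℝ, ∀ i j,
      DifferentiableAt ℝ (fun t => π (p.1, t, p.2.2) i j) p.2.1 := by
    intro p i j
    exact ((hπdiff i j).comp (by fun_prop : Differentiable ℝ
      (fun t : ℝ => ((p.1, t, p.2.2) : ℝ × ℝ × ℝ)))).differentiableAt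
  have hπv : ∀ p : ℝ × ℝ × ℝ, ∀ i j,
      DifferentiableAt ℝ (fun t => π (p.1, p.2.1, t) i j) p.2.2 := by
    intro p i j
    exact ((hπdiff i j).comp (by fun_prop : Differentiable ℝ
      (fun t : ℝ => ((p.1, p.2.1, t) : ℝ × ℝ × ℝ)))).differentiableAt
  have hψx : ∀ lam ∈ Ω, ∀ p : ℝ × ℝ × ℝ, ∀ i j,
      DifferentiableAt ℝ (fun t => ψ (t, p.2.1, p.2.2) lam i j) p.1 := by
    intro lam hm p i j
    exact (((hC1 lam hm i j).differentiable one_ne_zero).comp (by fun_prop : Differentiable ℝ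
      (fun t : ℝ => ((t, p.2.1, p.2.2) : ℝ × ℝ × ℝ)))).differentiableAt
  have hψu : ∀ lam ∈ Ω, ∀ p : ℝ × ℝ × ℝ, ∀ i j,
      DifferentiableAt ℝ (fun t => ψ (p.1, t, p.2.2) lam i j) p.2.1 := by
    intro lam hm p i j
    exact (((hC1 lam hm i j).differentiable one_ne_zero).comp (by fun_prop : Differentiable ℝ
      (fun t : ℝ => ((p.1, t, p.2.2) : ℝ × ℝ × ℝ)))).differentiableAt
  have hψv : ∀ lam ∈ Ω, ∀ p : ℝ × ℝ × ℝ, ∀ i j,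
      DifferentiableAt ℝ (fun t => ψ (p.1, p.2.1, t) lam i j) p.2.2 := by
    intro lam hm p i j
    exact (((hC1 lam hm i j).differentiable one_ne_zero).comp (by fun_prop : Differentiable ℝ
      (fun t : ℝ => ((p.1, p.2.1, t) : ℝ × ℝ × ℝ)))).differentiableAt
  -- structure identities for derivatives of π
  have hDx : ∀ p, pdx π p = pdx π p * π p + π p * pdx π p ∧ (pdx π p)ᴴ = pdx π p :=
    fun p => proj_deriv (fun t => π (t, p.2.1, p.2.2)) p.1 (hπx p) (fun t => hπ _)
  have hDu : ∀ p, pdu π p = pdu π p * π p + π p * pdu π p ∧ (pdu π p)ᴴ = pdu π p :=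
    fun p => proj_deriv (fun t => π (p.1, t, p.2.2)) p.2.1 (hπu p) (fun t => hπ _)
  have hDv : ∀ p, pdv π p = pdv π p * π p + π p * pdv π p ∧ (pdv π p)ᴴ = pdv π p :=
    fun p => proj_deriv (fun t => π (p.1, p.2.1, t)) p.2.2 (hπv p) (fun t => hπ _)
  -- the reduction: the linear equation for the dressed solution is equivalent
  -- to an algebraic identity
  have mainA : ∀ (p : ℝ × ℝ × ℝ) (lam : ℂ), lam ∈ Ω → lam ≠ z →
      ∀ M : Matrix (Fin n) (Fin n) ℂ,
      ((lam • pdx (fun q => simpleElt z (π q) lam * ψ q lam) p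
          - pdu (fun q => simpleElt z (π q) lam * ψ q lam) p
        = M * (simpleElt z (π p) lam * ψ p lam))
      ↔ M * simpleElt z (π p) lam
          = (-(c / (lam - z))) • (lam • pdx π p - pdu π p)
            + simpleElt z (π p) lam * A p) := by
    intro p lam hm hne M
    have hgx : pdx (fun q => simpleElt z (π q) lam * ψ q lam) p
        = ((-(c / (lam - z))) • pdx π p) * ψ p lam
          + simpleElt z (π p) lam * pdx (fun q => ψ q lam) p := by
      have h := mderiv_mul (fun t => simpleElt z (π (t, p.2.1, p.2.2)) lam)
        (fun t => ψ (t, p.2.1, p.2.2) lam) p.1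
        (simpleElt_diff_entry z lam _ _ (hπx p)) (hψx lam hm p)
      rw [mderiv_simpleElt z lam _ _ (hπx p)] at h
      exact h
    have hgu : pdu (fun q => simpleElt z (π q) lam * ψ q lam) p
        = ((-(c / (lam - z))) • pdu π p) * ψ p lam
          + simpleElt z (π p) lam * pdu (fun q => ψ q lam) p := by
      have h := mderiv_mul (fun t => simpleElt z (π (p.1, t, p.2.2)) lam)
        (fun t => ψ (p.1, t, p.2.2) lam) p.2.1
        (simpleElt_diff_entry z lam _ _ (hπu p)) (hψu lam hm p)
      rw [mderiv_simpleElt z lam _ _ (hπu p)] at h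
      exact h
    have hcomb : lam • pdx (fun q => simpleElt z (π q) lam * ψ q lam) p
          - pdu (fun q => simpleElt z (π q) lam * ψ q lam) p
        = ((-(c / (lam - z))) • (lam • pdx π p - pdu π p)
            + simpleElt z (π p) lam * A p) * ψ p lam := by
      rw [hgx, hgu, add_mul, mul_assoc, ← hA p lam hm]
      simp only [smul_add, smul_sub, mul_sub, sub_mul, smul_mul_assoc,
        mul_smul_comm, smul_smul, neg_smul, neg_mul, mul_neg, smul_neg]
      module
    rw [hcomb, ← mul_assoc]
    constructor
    · intro h
      exact (hinv p lam hm).mul_right_cancel h.symm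
    · intro h
      rw [h]
  have mainB : ∀ (p : ℝ × ℝ × ℝ) (lam : ℂ), lam ∈ Ω → lam ≠ z →
      ∀ M : Matrix (Fin n) (Fin n) ℂ,
      ((lam • pdv (fun q => simpleElt z (π q) lam * ψ q lam) p
          - pdx (fun q => simpleElt z (π q) lam * ψ q lam) p
        = M * (simpleElt z (π p) lam * ψ p lam))
      ↔ M * simpleElt z (π p) lam
          = (-(c / (lam - z))) • (lam • pdv π p - pdx π p)
            + simpleElt z (π p) lam * B p) := by
    intro p lam hm hne M
    have hgx : pdx (fun q => simpleElt z (π q) lam * ψ q lam) p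
        = ((-(c / (lam - z))) • pdx π p) * ψ p lam
          + simpleElt z (π p) lam * pdx (fun q => ψ q lam) p := by
      have h := mderiv_mul (fun t => simpleElt z (π (t, p.2.1, p.2.2)) lam)
        (fun t => ψ (t, p.2.1, p.2.2) lam) p.1
        (simpleElt_diff_entry z lam _ _ (hπx p)) (hψx lam hm p)
      rw [mderiv_simpleElt z lam _ _ (hπx p)] at h
      exact h
    have hgv : pdv (fun q => simpleElt z (π q) lam * ψ q lam) p
        = ((-(c / (lam - z))) • pdv π p) * ψ p lam
          + simpleElt z (π p) lam * pdv (fun q => ψ q lam) p := by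
      have h := mderiv_mul (fun t => simpleElt z (π (p.1, p.2.1, t)) lam)
        (fun t => ψ (p.1, p.2.1, t) lam) p.2.2
        (simpleElt_diff_entry z lam _ _ (hπv p)) (hψv lam hm p)
      rw [mderiv_simpleElt z lam _ _ (hπv p)] at h
      exact h
    have hcomb : lam • pdv (fun q => simpleElt z (π q) lam * ψ q lam) p
          - pdx (fun q => simpleElt z (π q) lam * ψ q lam) p
        = ((-(c / (lam - z))) • (lam • pdv π p - pdx π p)
            + simpleElt z (π p) lam * B p) * ψ p lam := by
      rw [hgv, hgx, add_mul, mul_assoc, ← hB p lam hm]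
      simp only [smul_add, smul_sub, mul_sub, sub_mul, smul_mul_assoc,
        mul_smul_comm, smul_smul, neg_smul, neg_mul, mul_neg, smul_neg]
      module
    rw [hcomb, ← mul_assoc]
    constructor
    · intro h
      exact (hinv p lam hm).mul_right_cancel h.symm
    · intro h
      rw [h]
  -- sample points in Ω \ {z}
  obtain ⟨ε, hε, hball⟩ := Metric.isOpen_iff.mp hΩ z hzΩ
  have hsample : ∀ t : ℝ, 0 < t → t < ε → z + (t : ℂ) ∈ Ω ∧ z + (t : ℂ) ≠ z := by
    intro t ht hlt
    refine ⟨hball ?_, ?_⟩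
    · simp only [Metric.mem_ball, dist_eq_norm, add_sub_cancel_left, Complex.norm_real, Real.norm_eq_abs]
      rwa [abs_of_pos ht]
    · intro h
      have h0 : (t : ℂ) = 0 := by simpa using congrArg (fun w => w - z) h
      exact absurd (by exact_mod_cast h0) (ne_of_gt ht)
  obtain ⟨hm1, hne1⟩ := hsample (ε/2) (by linarith) (by linarith)
  obtain ⟨hm2, hne2⟩ := hsample (ε/3) (by linarith) (by linarith)
  have hne12 : z + ((ε/2 : ℝ) : ℂ) ≠ z + ((ε/3 : ℝ) : ℂ) := by
    intro h
    have h' : ((ε/2 : ℝ) : ℂ) = ((ε/3 : ℝ) : ℂ) := add_left_cancel h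
    have h'' : (ε/2 : ℝ) = ε/3 := by exact_mod_cast h'
    linarith
  constructor
  · rintro ⟨At, Bt, hsol⟩ p
    have h1A := (mainA p _ hm1 hne1 (At p)).mp (hsol p _ hm1 hne1).1
    have h2A := (mainA p _ hm2 hne2 (At p)).mp (hsol p _ hm2 hne2).1
    have h1B := (mainB p _ hm1 hne1 (Bt p)).mp (hsol p _ hm1 hne1).2
    have h2B := (mainB p _ hm2 hne2 (Bt p)).mp (hsol p _ hm2 hne2).2
    constructor
    · exact (alg_core z (π p) (pdx π p) (pdu π p) (A p) (hπ p).2 (hDx p).1 (hDu p).1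
        (hπ p).1 (hDx p).2 (hDu p).2 (hAskew p)).mp
        (coeff_extract z c hcdef hc _ _ hne1 hne2 hne12 (π p) (At p) (A p) _ _ h1A h2A)
    · exact (alg_core z (π p) (pdv π p) (pdx π p) (B p) (hπ p).2 (hDv p).1 (hDx p).1
        (hπ p).1 (hDv p).2 (hDx p).2 (hBskew p)).mp
        (coeff_extract z c hcdef hc _ _ hne1 hne2 hne12 (π p) (Bt p) (B p) _ _ h1B h2B)
  · intro hstar
    refine ⟨fun p => A p - c • pdx π p, fun p => B p - c • pdv π p, ?_⟩
    intro p lam hm hne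
    constructor
    · exact (mainA p lam hm hne _).mpr (coeff_construct z c lam hcdef hne (π p) (A p) _ _
        ((alg_core z (π p) (pdx π p) (pdu π p) (A p) (hπ p).2 (hDx p).1 (hDu p).1
          (hπ p).1 (hDx p).2 (hDu p).2 (hAskew p)).mpr (hstar p).1))
    · exact (mainB p lam hm hne _).mpr (coeff_construct z c lam hcdef hne (π p) (B p) _ _
        ((alg_core z (π p) (pdv π p) (pdx π p) (B p) (hπ p).2 (hDv p).1 (hDx p).1
          (hπ p).1 (hDv p).2 (hDx p).2 (hBskew p)).mpr (hstar p).2))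

end
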